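/- A Lindelöf Hausdorff space is Stäckel-compact if and only if it is compact. -/

import Mathlib

def StackelCompact (X : Type*) [TopologicalSpace X] : Prop :=
  ∃ r : X → X → Prop, IsLinearOrder X r ∧
    ∀ F : Set X, IsClosed F → F.Nonempty →
      (∃ a ∈ F, ∀ x ∈ F, r a x) ∧ (∃ b ∈ F, ∀ x ∈ F, r x b)

open Set

section Lex

variable {X : Type*} [TopologicalSpace X] {ι : Type*}

/-- Lexicographic-style order on `X` induced by a family of real functions indexed
by a well-ordered type. -/
def lexR (rel : ι → ι → Prop) (g : ι → X → ℝ) (x y : X) : Prop :=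
  x = y ∨ ∃ α, g α x < g α y ∧ ∀ β, rel β α → g β x = g β y

theorem lexR_isLinearOrder (rel : ι → ι → Prop) [IsWellOrder ι rel] (g : ι → X → ℝ)
    (hsep : ∀ x y : X, x ≠ y → ∃ α, g α x ≠ g α y) :
    IsLinearOrder X (lexR rel g) := by
  have htrans : ∀ x y z : X, lexR rel g x y → lexR rel g y z → lexR rel g x z := by
    rintro x y z (rfl | ⟨α, hlt, hag⟩) h2
    · exact h2
    rcases h2 with rfl | ⟨α', hlt', hag'⟩
    · exact Or.inr ⟨α, hlt, hag⟩
    rcases trichotomous_of rel α α' with h | rfl | h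
    · refine Or.inr ⟨α, ?_, fun β hβ => (hag β hβ).trans (hag' β (Trans.trans hβ h))⟩
      rw [← hag' α h]; exact hlt
    · exact Or.inr ⟨α, hlt.trans hlt', fun β hβ => (hag β hβ).trans (hag' β hβ)⟩
    · refine Or.inr ⟨α', ?_, fun β hβ => (hag β (Trans.trans hβ h)).trans (hag' β hβ)⟩
      rw [hag α' h]; exact hlt'
  have hanti : ∀ x y : X, lexR rel g x y → lexR rel g y x → x = y := by
    rintro x y (rfl | ⟨α, hlt, hag⟩) h2
    · rfl
    rcases h2 with rfl | ⟨α', hlt', hag'⟩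
    · rfl
    exfalso
    rcases trichotomous_of rel α α' with h | rfl | h
    · rw [hag' α h] at hlt; exact lt_irrefl _ hlt
    · exact lt_irrefl _ (hlt.trans hlt')
    · rw [hag α' h] at hlt'; exact lt_irrefl _ hlt'
  have htotal : ∀ x y : X, lexR rel g x y ∨ lexR rel g y x := by
    intro x y
    by_cases hxy : x = y
    · exact Or.inl (Or.inl hxy)
    have hD : {α | g α x ≠ g α y}.Nonempty := by
      obtain ⟨α, hα⟩ := hsep x y hxy; exact ⟨α, hα⟩
    set α0 := (IsWellFounded.wf (r := rel)).min _ hD with hα0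
    have hmem : g α0 x ≠ g α0 y := (IsWellFounded.wf (r := rel)).min_mem _ hD
    have hag : ∀ β, rel β α0 → g β x = g β y := by
      intro β hβ
      by_contra hne
      exact (IsWellFounded.wf (r := rel)).not_lt_min {α | g α x ≠ g α y} hne hβ
    rcases lt_trichotomy (g α0 x) (g α0 y) with h | h | h
    · exact Or.inl (Or.inr ⟨α0, h, hag⟩)
    · exact absurd h hmem
    · exact Or.inr (Or.inr ⟨α0, h, fun β hβ => (hag β hβ).symm⟩)
  exact { refl := fun x => Or.inl rfl
          trans := htrans
          antisymm := hanti
          total := htotal }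

variable (rel : ι → ι → Prop) (g : ι → X → ℝ)

/-- Transfinite minimization sets: `minK α` is the subset of `F` obtained by successively
minimizing `g β` for `β ≤ α` in the well-order `rel`. -/
noncomputable def minK [IsWellOrder ι rel] (F : Set X) : ι → Set X :=
  (IsWellFounded.wf (r := rel)).fix fun α K =>
    {x ∈ F ∩ ⋂ (β : {β // rel β α}), K β.1 β.2 |
      g α x = sInf (g α '' (F ∩ ⋂ (β : {β // rel β α}), K β.1 β.2))}

/-- The intersection so far. -/
noncomputable def pSet [IsWellOrder ι rel] (F : Set X) (α : ι) : Set X :=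
  F ∩ ⋂ (β : {β // rel β α}), minK rel g F β.1

theorem minK_eq [IsWellOrder ι rel] (F : Set X) (α : ι) :
    minK rel g F α =
      {x ∈ pSet rel g F α | g α x = sInf (g α '' pSet rel g F α)} := by
  rw [minK, WellFounded.fix_eq]
  rfl

theorem minK_subset_pSet [IsWellOrder ι rel] (F : Set X) (α : ι) :
    minK rel g F α ⊆ pSet rel g F α := by
  rw [minK_eq]; exact sep_subset _ _

theorem minK_subset_of_rel [IsWellOrder ι rel] (F : Set X) {β α : ι} (h : rel β α) :
    minK rel g F α ⊆ minK rel g F β := by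
  intro x hx
  have := (minK_subset_pSet rel g F α hx).2
  exact mem_iInter.mp this ⟨β, h⟩

theorem minK_spec [CompactSpace X] [IsWellOrder ι rel] (hcont : ∀ α, Continuous (g α))
    {F : Set X} (hF : IsClosed F) (hne : F.Nonempty) (α : ι) :
    IsClosed (minK rel g F α) ∧ (minK rel g F α).Nonempty ∧ minK rel g F α ⊆ F := by
  induction α using WellFounded.induction (IsWellFounded.wf (r := rel)) with
  | _ α IH =>
  have hPc : IsClosed (pSet rel g F α) :=
    hF.inter (isClosed_iInter fun β => (IH β.1 β.2).1)
  have hPsub : pSet rel g F α ⊆ F := inter_subset_left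
  have hPne : (pSet rel g F α).Nonempty := by
    rcases isEmpty_or_nonempty {β // rel β α} with hemp | hnemp
    · rw [pSet, iInter_of_empty, inter_univ]; exact hne
    · have hdir : Directed (· ⊇ ·) (fun β : {β // rel β α} => minK rel g F β.1) := by
        intro β γ
        rcases trichotomous_of rel β.1 γ.1 with h | h | h
        · exact ⟨γ, minK_subset_of_rel rel g F h, le_refl _⟩
        · refine ⟨γ, ?_, le_refl _⟩
          show minK rel g F γ.1 ⊆ minK rel g F β.1
          rw [show β.1 = γ.1 from h]
        · exact ⟨β, le_refl _, minK_subset_of_rel rel g F h⟩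
      have hint : (⋂ (β : {β // rel β α}), minK rel g F β.1).Nonempty :=
        IsCompact.nonempty_iInter_of_directed_nonempty_isCompact_isClosed _ hdir
          (fun β => (IH β.1 β.2).2.1) (fun β => (IH β.1 β.2).1.isCompact)
          (fun β => (IH β.1 β.2).1)
      obtain ⟨x, hx⟩ := hint
      refine ⟨x, ?_, hx⟩
      obtain ⟨β⟩ := hnemp
      exact (IH β.1 β.2).2.2 (mem_iInter.mp hx β)
  have hclosed : IsClosed (minK rel g F α) := by
    rw [minK_eq]
    have : {x ∈ pSet rel g F α | g α x = sInf (g α '' pSet rel g F α)} =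
        pSet rel g F α ∩ (g α) ⁻¹' {sInf (g α '' pSet rel g F α)} := by
      ext x; simp [Set.mem_sep_iff]
    rw [this]
    exact hPc.inter (IsClosed.preimage (hcont α) isClosed_singleton)
  refine ⟨hclosed, ?_, fun x hx => hPsub (minK_subset_pSet rel g F α hx)⟩
  have himg : IsCompact (g α '' pSet rel g F α) := (hPc.isCompact).image (hcont α)
  have : sInf (g α '' pSet rel g F α) ∈ g α '' pSet rel g F α :=
    himg.sInf_mem (hPne.image _)
  obtain ⟨x, hxP, hxe⟩ := this
  rw [minK_eq]
  exact ⟨x, hxP, hxe⟩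

theorem lexR_exists_min [CompactSpace X] [IsWellOrder ι rel]
    (hcont : ∀ α, Continuous (g α))
    (hsep : ∀ x y : X, x ≠ y → ∃ α, g α x ≠ g α y)
    {F : Set X} (hF : IsClosed F) (hne : F.Nonempty) :
    ∃ m ∈ F, ∀ x ∈ F, lexR rel g m x := by
  have hTne : (F ∩ ⋂ α, minK rel g F α).Nonempty := by
    rcases isEmpty_or_nonempty ι with hemp | hnemp
    · rw [iInter_of_empty, inter_univ]; exact hne
    · have hdir : Directed (· ⊇ ·) (fun α : ι => minK rel g F α) := by
        intro β γ
        rcases trichotomous_of rel β γ with h | h | h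
        · exact ⟨γ, minK_subset_of_rel rel g F h, le_refl _⟩
        · refine ⟨γ, ?_, le_refl _⟩
          show minK rel g F γ ⊆ minK rel g F β
          rw [h]
        · exact ⟨β, le_refl _, minK_subset_of_rel rel g F h⟩
      have hint : (⋂ α, minK rel g F α).Nonempty :=
        IsCompact.nonempty_iInter_of_directed_nonempty_isCompact_isClosed _ hdir
          (fun α => (minK_spec rel g hcont hF hne α).2.1)
          (fun α => (minK_spec rel g hcont hF hne α).1.isCompact)
          (fun α => (minK_spec rel g hcont hF hne α).1)
      obtain ⟨x, hx⟩ := hint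
      obtain ⟨α⟩ := hnemp
      exact ⟨x, (minK_spec rel g hcont hF hne α).2.2 (mem_iInter.mp hx α), hx⟩
  obtain ⟨m, hmF, hmK⟩ := hTne
  have hmK' : ∀ α, m ∈ minK rel g F α := mem_iInter.mp hmK
  refine ⟨m, hmF, fun x hxF => ?_⟩
  by_cases hxm : m = x
  · exact Or.inl hxm
  have hD : {α | g α m ≠ g α x}.Nonempty := by
    obtain ⟨α, hα⟩ := hsep m x hxm; exact ⟨α, hα⟩
  set α0 := (IsWellFounded.wf (r := rel)).min _ hD with hα0
  have hmem0 : g α0 m ≠ g α0 x := (IsWellFounded.wf (r := rel)).min_mem _ hD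
  have hag : ∀ β, rel β α0 → g β m = g β x := by
    intro β hβ
    by_contra hne'
    exact (IsWellFounded.wf (r := rel)).not_lt_min {α | g α m ≠ g α x} hne' hβ
  -- x belongs to minK β for all β below α0
  have hxK : ∀ β, rel β α0 → x ∈ minK rel g F β := by
    intro β
    induction β using WellFounded.induction (IsWellFounded.wf (r := rel)) with
    | _ β IH =>
    intro hβ0
    have hxP : x ∈ pSet rel g F β := by
      refine ⟨hxF, mem_iInter.mpr fun γ => IH γ.1 γ.2 (Trans.trans γ.2 hβ0)⟩
    have hm : m ∈ minK rel g F β := hmK' β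
    rw [minK_eq] at hm ⊢
    refine ⟨hxP, ?_⟩
    rw [← (hag β hβ0)]
    exact hm.2
  have hxP0 : x ∈ pSet rel g F α0 :=
    ⟨hxF, mem_iInter.mpr fun γ => hxK γ.1 γ.2⟩
  have hm0 := hmK' α0
  rw [minK_eq] at hm0
  have hbdd : BddBelow (g α0 '' pSet rel g F α0) := by
    have hPc : IsClosed (pSet rel g F α0) :=
      hF.inter (isClosed_iInter fun β => (minK_spec rel g hcont hF hne β.1).1)
    exact ((hPc.isCompact).image (hcont α0)).bddBelow
  have hle : g α0 m ≤ g α0 x := by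
    rw [hm0.2]
    exact csInf_le hbdd (mem_image_of_mem _ hxP0)
  exact Or.inr ⟨α0, lt_of_le_of_ne hle hmem0, hag⟩

theorem lexR_neg_iff (rel : ι → ι → Prop) (g : ι → X → ℝ) (x y : X) :
    lexR rel (fun α z => -(g α z)) x y ↔ lexR rel g y x := by
  constructor
  · rintro (rfl | ⟨α, hlt, hag⟩)
    · exact Or.inl rfl
    · exact Or.inr ⟨α, neg_lt_neg_iff.mp hlt, fun β hβ => (neg_inj.mp (hag β hβ)).symm⟩
  · rintro (rfl | ⟨α, hlt, hag⟩)
    · exact Or.inl rfl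
    · exact Or.inr ⟨α, neg_lt_neg hlt, fun β hβ => neg_inj.mpr (hag β hβ).symm⟩

end Lex

section Main

variable {X : Type*} [TopologicalSpace X]

theorem stackel_of_compact [T2Space X] [CompactSpace X] : StackelCompact X := by
  classical
  -- a separating family of continuous functions, via Urysohn's lemma
  set ι := {p : X × X // p.1 ≠ p.2} with hι
  have hfam : ∀ p : ι, ∃ f : C(X, ℝ), f p.1.1 ≠ f p.1.2 := by
    intro p
    obtain ⟨f, hf0, hf1, -⟩ := exists_continuous_zero_one_of_isClosed
      (isClosed_singleton (x := p.1.1)) (isClosed_singleton (x := p.1.2))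
      (by simpa [Set.disjoint_singleton] using p.2)
    refine ⟨f, ?_⟩
    rw [hf0 (mem_singleton _), hf1 (mem_singleton _)]
    simp
  choose f hf using hfam
  set g : ι → X → ℝ := fun p x => f p x with hg
  have hcont : ∀ p : ι, Continuous (g p) := fun p => (f p).continuous
  have hsep : ∀ x y : X, x ≠ y → ∃ p : ι, g p x ≠ g p y := by
    intro x y hxy
    exact ⟨⟨(x, y), hxy⟩, hf ⟨(x, y), hxy⟩⟩
  set rel : ι → ι → Prop := WellOrderingRel with hrel
  refine ⟨lexR rel g, lexR_isLinearOrder rel g hsep, fun F hF hne => ?_⟩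
  constructor
  · exact lexR_exists_min rel g hcont hsep hF hne
  · have hsep' : ∀ x y : X, x ≠ y → ∃ p : ι, -(g p x) ≠ -(g p y) := by
      intro x y hxy
      obtain ⟨p, hp⟩ := hsep x y hxy
      exact ⟨p, fun h => hp (by linarith)⟩
    obtain ⟨m, hmF, hm⟩ := lexR_exists_min rel (fun p z => -(g p z))
      (fun p => (hcont p).neg) hsep' hF hne
    exact ⟨m, hmF, fun x hx => (lexR_neg_iff rel g m x).mp (hm x hx)⟩

theorem compact_of_stackel_lindelof [T2Space X] [LindelofSpace X]
    (h : StackelCompact X) : CompactSpace X := by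
  classical
  obtain ⟨r, hlin, hmm⟩ := h
  constructor
  rw [isCompact_iff_finite_subcover]
  intro κ U hUo hUc
  -- countable subcover by Lindelöf
  obtain ⟨t, htc, htsub⟩ := isLindelof_univ.elim_countable_subcover U hUo hUc
  rcases t.eq_empty_or_nonempty with rfl | htne
  · refine ⟨∅, ?_⟩
    simpa using htsub
  obtain ⟨e, he⟩ := htc.exists_eq_range htne
  -- the countable cover
  set V : ℕ → Set X := fun n => U (e n) with hV
  have hVo : ∀ n, IsOpen (V n) := fun n => hUo _
  have hVc : (univ : Set X) ⊆ ⋃ n, V n := by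
    intro x hx
    obtain ⟨i, hi, hxi⟩ := mem_iUnion₂.mp (htsub hx)
    rw [he] at hi
    obtain ⟨n, rfl⟩ := hi
    exact mem_iUnion.mpr ⟨n, hxi⟩
  by_contra hnofin
  push_neg at hnofin
  -- the decreasing sequence of nonempty closed sets
  set G : ℕ → Set X := fun n => (⋃ i ∈ Finset.range (n + 1), V i)ᶜ with hG
  have hGc : ∀ n, IsClosed (G n) := fun n =>
    (isOpen_iUnion fun i => isOpen_iUnion fun _ => hVo i).isClosed_compl
  have hGne : ∀ n, (G n).Nonempty := by
    intro n
    rw [Set.nonempty_compl]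
    intro hall
    refine hnofin ((Finset.range (n + 1)).image e) ?_
    intro x hx
    have : x ∈ ⋃ i ∈ Finset.range (n + 1), V i := hall ▸ mem_univ x
    obtain ⟨i, hi, hxi⟩ := mem_iUnion₂.mp this
    exact mem_iUnion₂.mpr ⟨e i, Finset.mem_image_of_mem e hi, hxi⟩
  have hGmono : ∀ m n, m ≤ n → G n ⊆ G m := by
    intro m n hmn
    apply compl_subset_compl.mpr
    apply iUnion₂_subset
    intro i hi
    exact subset_iUnion₂ (s := fun i _ => V i) i
      (Finset.mem_range.mpr (lt_of_lt_of_le (Finset.mem_range.mp hi) (by omega)))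
  have hGint : ∀ x : X, ∃ n, x ∉ G n := by
    intro x
    obtain ⟨n, hn⟩ := mem_iUnion.mp (hVc (mem_univ x))
    exact ⟨n, fun hx => hx (mem_iUnion₂.mpr ⟨n, Finset.mem_range.mpr (by omega), hn⟩)⟩
  -- pick the maxima
  have hmax : ∀ n, ∃ b ∈ G n, ∀ x ∈ G n, r x b := fun n => (hmm (G n) (hGc n) (hGne n)).2
  choose b hbG hbmax using hmax
  have hbanti : ∀ m n, m ≤ n → r (b n) (b m) := fun m n hmn =>
    hbmax m (b n) (hGmono m n hmn (hbG n))
  -- the closure of the set of maxima has a minimum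
  set C := closure (range b) with hC
  have hCne : C.Nonempty := (range_nonempty b).closure
  obtain ⟨m, hmC, hmmin⟩ := (hmm C isClosed_closure hCne).1
  obtain ⟨k, hk⟩ := hGint m
  -- m is one of the b j for j < k
  have hsplit : range b ⊆ {x | ∃ j < k, x = b j} ∪ G k := by
    rintro x ⟨n, rfl⟩
    by_cases hn : n < k
    · exact Or.inl ⟨n, hn, rfl⟩
    · exact Or.inr (hGmono k n (by omega) (hbG n))
  have hCsub : C ⊆ closure {x | ∃ j < k, x = b j} ∪ G k := by
    calc C ⊆ closure ({x | ∃ j < k, x = b j} ∪ G k) := closure_mono hsplit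
    _ = closure {x | ∃ j < k, x = b j} ∪ closure (G k) := closure_union
    _ = closure {x | ∃ j < k, x = b j} ∪ G k := by rw [(hGc k).closure_eq]
  have hfin : Set.Finite {x | ∃ j < k, x = b j} := by
    apply Set.Finite.subset (Set.finite_range fun j : Fin k => b j)
    rintro x ⟨j, hj, rfl⟩
    exact ⟨⟨j, hj⟩, rfl⟩
  have hmeq : ∃ j < k, m = b j := by
    rcases hCsub hmC with h | h
    · rwa [hfin.isClosed.closure_eq] at h
    · exact absurd h hk
  obtain ⟨j, hjk, hmj⟩ := hmeq
  -- case analysis: eventually constant or not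
  by_cases hconst : ∀ n, j ≤ n → b n = b j
  · -- then b j is in every G n
    obtain ⟨q, hq⟩ := hGint (b j)
    apply hq
    rcases le_or_gt j q with hle | hlt
    · rw [← hconst q hle]; exact hbG q
    · exact hGmono q j (le_of_lt hlt) (hbG j)
  · push_neg at hconst
    obtain ⟨n, hjn, hne'⟩ := hconst
    have h1 : r (b n) (b j) := hbanti j n hjn
    have h2 : r m (b n) := hmmin (b n) (subset_closure (mem_range_self n))
    rw [hmj] at h2
    exact hne' (hlin.antisymm _ _ h1 h2)

end Main

/-- A Lindelöf Hausdorff space is Stäckel-compact if and only if it is compact. -/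
theorem stackelCompact_iff_compact_of_lindelof (X : Type*) [TopologicalSpace X]
    [T2Space X] [LindelofSpace X] : StackelCompact X ↔ CompactSpace X := by
  constructor
  · exact compact_of_stackel_lindelof
  · intro h
    exact stackel_of_compact
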